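/- arXiv:2210.10577 — 2 statements merged into one kernel-verified Lean document; each statement's English description precedes it below -/
import Mathlib

section
/- Let k be a positive integer and let (a_n)_{n≥1} be the {1,...,k}-LID sequence. Then for all nonnegative integers n: a_{n+1} = 1 + ∑ a_{n−i(k+1)}, where the sum ranges over all nonnegative integers i with n − i(k+1) ≥ 1; moreover a_{n+1} = n + 1 if n ≤ k, and a_{n+1} = a_n + a_{n−k} if n ≥ k + 1. -/
/-- `L` is an `S`-legal index set: all pairwise index differences avoid `S`. -/
def SlidLegal (S : Set ℕ) (L : Finset ℕ) : Prop :=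
  ∀ i ∈ L, ∀ j ∈ L, ((i : ℤ) - (j : ℤ)).natAbs ∉ S

/-- `m` has an `S`-LID decomposition using the terms `a 1, …, a n`. -/
def SlidDecomp (S : Set ℕ) (a : ℕ → ℕ) (n m : ℕ) : Prop :=
  ∃ L : Finset ℕ, L ⊆ Finset.Icc 1 n ∧ SlidLegal S L ∧ m = ∑ ℓ ∈ L, a ℓ

/-- `a` is the `S`-LID sequence (indexed from `1`; `a 0` is unconstrained):
for each `n ≥ 1`, `a n` is the least positive integer with no `S`-LID
decomposition using `a 1, …, a (n-1)`. -/
def IsSlidSeq (S : Set ℕ) (a : ℕ → ℕ) : Prop :=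
  ∀ n, 1 ≤ n → IsLeast {m | 0 < m ∧ ¬ SlidDecomp S a (n - 1) m} (a n)

private def Sf (k : ℕ) (a : ℕ → ℕ) (n : ℕ) : ℕ :=
  ∑ i ∈ (Finset.range (n + 1)).filter (fun i => 1 ≤ n - i * (k + 1)), a (n - i * (k + 1))

private lemma Sf_zero (k : ℕ) (a : ℕ → ℕ) : Sf k a 0 = 0 := by
  simp [Sf]

private lemma slid_mem_filter_iff (k n i : ℕ) :
    i ∈ (Finset.range (n + 1)).filter (fun i => 1 ≤ n - i * (k + 1)) ↔ i * (k + 1) < n := by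
  simp only [Finset.mem_filter, Finset.mem_range]
  constructor
  · rintro ⟨_, h⟩; omega
  · intro h
    have : i ≤ i * (k + 1) := Nat.le_mul_of_pos_right _ (by omega)
    omega

private lemma Sf_rec (k : ℕ) (a : ℕ → ℕ) (n : ℕ) (hn : 1 ≤ n) :
    Sf k a n = a n + Sf k a (n - (k + 1)) := by
  have hset : (Finset.range (n + 1)).filter (fun i => 1 ≤ n - i * (k + 1))
      = insert 0 (((Finset.range (n - (k + 1) + 1)).filter
          (fun i => 1 ≤ n - (k + 1) - i * (k + 1))).image (· + 1)) := by
    ext i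
    simp only [slid_mem_filter_iff, Finset.mem_insert, Finset.mem_image]
    constructor
    · intro h
      rcases Nat.eq_zero_or_pos i with h0 | h0
      · exact Or.inl h0
      · obtain ⟨j, rfl⟩ : ∃ j, i = j + 1 := ⟨i - 1, by omega⟩
        refine Or.inr ⟨j, ?_, rfl⟩
        have hmul : (j + 1) * (k + 1) = j * (k + 1) + (k + 1) := by ring
        omega
    · rintro (rfl | ⟨j, hj, rfl⟩)
      · simpa using (show 0 < n by omega)
      · have hmul : (j + 1) * (k + 1) = j * (k + 1) + (k + 1) := by ring
        omega
  rw [Sf, hset, Finset.sum_insert (by simp), Finset.sum_image (by intro x _ y _ h; simp only at h; omega)]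
  simp only [Nat.zero_mul, Nat.sub_zero]
  congr 1
  rw [Sf]
  refine Finset.sum_congr rfl fun j _ => ?_
  congr 1
  have hmul : (j + 1) * (k + 1) = (k + 1) + j * (k + 1) := by ring
  rw [hmul, ← Nat.sub_sub]

private lemma slid_key (k : ℕ) (hk : 1 ≤ k) (a : ℕ → ℕ)
    (ha : IsSlidSeq (Set.Icc 1 k) a) :
    ∀ n : ℕ,
      (∀ L : Finset ℕ, L ⊆ Finset.Icc 1 n → SlidLegal (Set.Icc 1 k) L →
        ∑ ℓ ∈ L, a ℓ ≤ Sf k a n) ∧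
      (∀ m, 1 ≤ m → m ≤ Sf k a n → SlidDecomp (Set.Icc 1 k) a n m) ∧
      a (n + 1) = Sf k a n + 1 := by
  have apos : ∀ n, 1 ≤ n → 1 ≤ a n := fun n hn => (ha n hn).1.1
  intro n
  induction n using Nat.strong_induction_on with
  | _ n IH =>
  rcases Nat.eq_zero_or_pos n with rfl | hn
  · refine ⟨?_, ?_, ?_⟩
    · intro L hL _
      have hL0 : L = ∅ := by simpa [Finset.subset_empty] using hL
      simp [hL0, Sf_zero]
    · intro m hm hmS; rw [Sf_zero] at hmS; omega
    · rw [Sf_zero]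
      have h1 := ha 1 le_rfl
      have h2 : IsLeast {m | 0 < m ∧ ¬ SlidDecomp (Set.Icc 1 k) a 0 m} 1 := by
        constructor
        · refine ⟨one_pos, ?_⟩
          rintro ⟨L, hL, _, hsum⟩
          have hL0 : L = ∅ := by simpa [Finset.subset_empty] using hL
          simp [hL0] at hsum
        · rintro m ⟨hm, _⟩; omega
      simpa using h1.unique h2
  · have hn1 : n - 1 < n := by omega
    have hmlt : n - (k + 1) < n := by omega
    obtain ⟨IHb1, IHc1, IHa1⟩ := IH (n - 1) hn1
    obtain ⟨IHb2, IHc2, IHa2⟩ := IH (n - (k + 1)) hmlt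
    have hrec := Sf_rec k a n hn
    have hprev : a n = Sf k a (n - 1) + 1 := by
      have h := IHa1; rwa [Nat.sub_add_cancel hn] at h
    have bound : ∀ L : Finset ℕ, L ⊆ Finset.Icc 1 n → SlidLegal (Set.Icc 1 k) L →
        ∑ ℓ ∈ L, a ℓ ≤ Sf k a n := by
      intro L hL hleg
      by_cases hnL : n ∈ L
      · have hsub : L.erase n ⊆ Finset.Icc 1 (n - (k + 1)) := by
          intro ℓ hℓ
          have hℓL := Finset.mem_of_mem_erase hℓ
          have hne := Finset.ne_of_mem_erase hℓ
          have h1 := hL hℓL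
          rw [Finset.mem_Icc] at h1 ⊢
          have h2 := hleg ℓ hℓL n hnL
          simp only [Set.mem_Icc] at h2
          omega
        have hleg' : SlidLegal (Set.Icc 1 k) (L.erase n) :=
          fun i hi j hj => hleg i (Finset.mem_of_mem_erase hi) j (Finset.mem_of_mem_erase hj)
        have h3 := IHb2 (L.erase n) hsub hleg'
        have hsum := Finset.add_sum_erase L a hnL
        omega
      · have hsub : L ⊆ Finset.Icc 1 (n - 1) := by
          intro ℓ hℓ
          have h1 := hL hℓ
          rw [Finset.mem_Icc] at h1 ⊢
          have h2 : ℓ ≠ n := fun h => hnL (h ▸ hℓ)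
          omega
        have h3 := IHb1 L hsub hleg
        have h4 := apos n hn
        omega
    have compl : ∀ m, 1 ≤ m → m ≤ Sf k a n → SlidDecomp (Set.Icc 1 k) a n m := by
      intro m hm1 hmS
      by_cases hcase : m ≤ Sf k a (n - 1)
      · obtain ⟨L, hL, hleg, hsum⟩ := IHc1 m hm1 hcase
        exact ⟨L, hL.trans (Finset.Icc_subset_Icc_right (by omega)), hleg, hsum⟩
      · have hman : a n ≤ m := by omega
        rcases Nat.eq_or_lt_of_le hman with heq | hlt
        · refine ⟨{n}, ?_, ?_, ?_⟩
          · simp only [Finset.singleton_subset_iff, Finset.mem_Icc]; omega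
          · intro i hi j hj
            simp only [Finset.mem_singleton] at hi hj
            subst hi; subst hj
            simp only [Set.mem_Icc]; omega
          · simp [← heq]
        · have hr1 : 1 ≤ m - a n := by omega
          have hr2 : m - a n ≤ Sf k a (n - (k + 1)) := by omega
          obtain ⟨L', hL', hleg', hsum'⟩ := IHc2 (m - a n) hr1 hr2
          have hmpos : 1 ≤ n - (k + 1) := by
            by_contra h
            have h0 : n - (k + 1) = 0 := by omega
            rw [h0, Sf_zero] at hr2; omega
          have hnL' : n ∉ L' := by
            intro h; have h1 := hL' h; rw [Finset.mem_Icc] at h1; omega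
          refine ⟨insert n L', ?_, ?_, ?_⟩
          · intro x hx
            rcases Finset.mem_insert.mp hx with rfl | hx
            · rw [Finset.mem_Icc]; omega
            · exact (Finset.Icc_subset_Icc_right (by omega)) (hL' hx)
          · intro i hi j hj
            rcases Finset.mem_insert.mp hi with rfl | hi' <;>
              rcases Finset.mem_insert.mp hj with rfl | hj'
            · simp only [Set.mem_Icc]; omega
            · have h1 := hL' hj'; rw [Finset.mem_Icc] at h1
              simp only [Set.mem_Icc]; omega
            · have h1 := hL' hi'; rw [Finset.mem_Icc] at h1
              simp only [Set.mem_Icc]; omega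
            · exact hleg' i hi' j hj'
          · rw [Finset.sum_insert hnL', ← hsum']; omega
    refine ⟨bound, compl, ?_⟩
    have hleast : IsLeast {m | 0 < m ∧ ¬ SlidDecomp (Set.Icc 1 k) a n m} (Sf k a n + 1) := by
      constructor
      · refine ⟨by omega, ?_⟩
        rintro ⟨L, hL, hleg, hsum⟩
        have h := bound L hL hleg
        omega
      · rintro m ⟨hm0, hmd⟩
        by_contra h
        exact hmd (compl m (by omega) (by omega))
    have h1 := ha (n + 1) (by omega)
    simpa using h1.unique hleast

theorem interval_slid_formulas
    (k : ℕ) (hk : 1 ≤ k)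
    (a : ℕ → ℕ) (ha : IsSlidSeq (Set.Icc 1 k) a) :
    ∀ n : ℕ,
      a (n + 1) = 1 + ∑ i ∈ (Finset.range (n + 1)).filter
          (fun i => 1 ≤ n - i * (k + 1)), a (n - i * (k + 1)) ∧
      (n ≤ k → a (n + 1) = n + 1) ∧
      (k + 1 ≤ n → a (n + 1) = a n + a (n - k)) := by
  have key := slid_key k hk a ha
  have part2 : ∀ n, n ≤ k → a (n + 1) = n + 1 := by
    intro n
    induction n with
    | zero => intro _; rw [(key 0).2.2, Sf_zero]
    | succ n ihn =>
      intro hnk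
      rw [(key (n + 1)).2.2, Sf_rec k a (n + 1) (by omega)]
      have h0 : n + 1 - (k + 1) = 0 := by omega
      rw [h0, Sf_zero, ihn (by omega)]
  intro n
  refine ⟨?_, part2 n, ?_⟩
  · have h := (key n).2.2
    rw [Sf] at h
    omega
  · intro hkn
    rw [(key n).2.2, Sf_rec k a n (by omega)]
    have h := (key (n - (k + 1))).2.2
    have he : n - (k + 1) + 1 = n - k := by omega
    rw [he] at h
    omega
end

section
/- Let c' be a positive integer satisfying k ≥ 2(c' + 1). Then for all n ≥ 1, a_n > ∑ a_{n−i(k−c')}, where the sum ranges over all positive integers i with n − i(k−c') ≥ 1. -/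
lemma Slid.pos {S : Set ℕ} {a : ℕ → ℕ} (ha : IsSlidSeq S a) {n : ℕ} (hn : 1 ≤ n) :
    0 < a n := (ha n hn).1.1

lemma Slid.decomp_mono {S : Set ℕ} {a : ℕ → ℕ} {n n' m : ℕ} (h : n ≤ n')
    (hd : SlidDecomp S a n m) : SlidDecomp S a n' m := by
  obtain ⟨L, h1, h2, h3⟩ := hd
  exact ⟨L, h1.trans (Finset.Icc_subset_Icc_right h), h2, h3⟩

lemma Slid.decomp_of_lt {S : Set ℕ} {a : ℕ → ℕ} (ha : IsSlidSeq S a) {n m : ℕ}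
    (hn : 1 ≤ n) (hm : 0 < m) (h : m < a n) : SlidDecomp S a (n - 1) m := by
  by_contra hc
  have := (ha n hn).2 ⟨hm, hc⟩
  omega

lemma Slid.singleton_decomp {S : Set ℕ} (hS : ∀ s ∈ S, 0 < s) {a : ℕ → ℕ} {n : ℕ}
    (hn : 1 ≤ n) : SlidDecomp S a n (a n) := by
  refine ⟨{n}, ?_, ?_, ?_⟩
  · simp only [Finset.singleton_subset_iff, Finset.mem_Icc]
    omega
  · intro i hi j hj
    simp only [Finset.mem_singleton] at hi hj
    subst hi; subst hj
    simp only [sub_self, Int.natAbs_zero]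
    intro h0
    exact absurd (hS 0 h0) (lt_irrefl 0)
  · simp

lemma Slid.lt_succ {S : Set ℕ} (hS : ∀ s ∈ S, 0 < s) {a : ℕ → ℕ} (ha : IsSlidSeq S a)
    {n : ℕ} (hn : 1 ≤ n) : a n < a (n + 1) := by
  have h2 := (ha (n + 1) (by omega)).1.2
  simp only [Nat.add_sub_cancel] at h2
  by_contra hle
  push_neg at hle
  have hpos := Slid.pos ha (show 1 ≤ n + 1 by omega)
  rcases eq_or_lt_of_le hle with h | h
  · exact h2 (h ▸ Slid.singleton_decomp hS hn)
  · exact h2 (Slid.decomp_mono (by omega) (Slid.decomp_of_lt ha hn hpos h))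

lemma Slid.mono {S : Set ℕ} (hS : ∀ s ∈ S, 0 < s) {a : ℕ → ℕ} (ha : IsSlidSeq S a)
    {m n : ℕ} (hm : 1 ≤ m) (h : m ≤ n) : a m ≤ a n := by
  induction n with
  | zero => omega
  | succ n ih =>
    rcases Nat.lt_or_ge m (n + 1) with h' | h'
    · exact le_trans (ih (by omega)) (Slid.lt_succ hS ha (by omega)).le
    · have hmn : m = n + 1 := by omega
      exact hmn ▸ le_rfl

lemma Slid.strictMono {S : Set ℕ} (hS : ∀ s ∈ S, 0 < s) {a : ℕ → ℕ} (ha : IsSlidSeq S a)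
    {m n : ℕ} (hm : 1 ≤ m) (h : m < n) : a m < a n :=
  lt_of_lt_of_le (Slid.lt_succ hS ha hm) (Slid.mono hS ha (by omega) h)

/-- Growth lemma: `a n ≥ a (n-1) + a (n-1-k)` since gaps `> k` are always legal. -/
lemma Slid.G (S : Finset ℕ) (hne : S.Nonempty) (hpos : ∀ s ∈ S, 0 < s)
    (k : ℕ) (hk : k = S.max' hne) (a : ℕ → ℕ) (ha : IsSlidSeq ↑S a)
    {n : ℕ} (hn : k + 2 ≤ n) :
    a (n - 1) + a (n - 1 - k) ≤ a n := by
  have hmax : ∀ s ∈ S, s ≤ k := fun s hs => hk ▸ S.le_max' s hs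
  have hpos' : ∀ s ∈ (↑S : Set ℕ), 0 < s := fun s hs => hpos s hs
  by_contra hcon
  push_neg at hcon
  have hposn := Slid.pos ha (show 1 ≤ n by omega)
  have hnd := (ha n (by omega)).1.2
  apply hnd
  rcases lt_trichotomy (a n) (a (n - 1)) with h1 | h1 | h1
  · exact Slid.decomp_mono (by omega) (Slid.decomp_of_lt ha (by omega) hposn h1)
  · rw [h1]
    exact Slid.singleton_decomp hpos' (by omega)
  · have hm' : 0 < a n - a (n - 1) := by omega
    have hm'' : a n - a (n - 1) < a (n - 1 - k) := by omega
    obtain ⟨L, hLsub, hLleg, hLsum⟩ :=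
      Slid.decomp_of_lt ha (show 1 ≤ n - 1 - k by omega) hm' hm''
    have hLbd : ∀ ℓ ∈ L, ℓ ≤ n - 2 - k := by
      intro ℓ hℓ
      have := hLsub hℓ
      simp only [Finset.mem_Icc] at this
      omega
    have hnot : (n - 1) ∉ L := fun h => by have := hLbd _ h; omega
    refine ⟨insert (n - 1) L, ?_, ?_, ?_⟩
    · intro x hx
      rcases Finset.mem_insert.mp hx with h | h
      · simp only [h, Finset.mem_Icc]; omega
      · have := hLsub h
        simp only [Finset.mem_Icc] at this ⊢
        omega
    · intro i hi j hj
      rcases Finset.mem_insert.mp hi with hi' | hi' <;>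
        rcases Finset.mem_insert.mp hj with hj' | hj'
      · subst hi'; subst hj'
        simp only [sub_self, Int.natAbs_zero]
        exact fun h0 => absurd (hpos' 0 h0) (lt_irrefl 0)
      · subst hi'
        intro hmem
        have hb := hmax _ (Finset.mem_coe.mp hmem)
        have hj2 := hLbd _ hj'
        omega
      · subst hj'
        intro hmem
        have hb := hmax _ (Finset.mem_coe.mp hmem)
        have hi2 := hLbd _ hi'
        omega
      · exact hLleg i hi' j hj'
    · rw [Finset.sum_insert hnot, ← hLsum]
      omega

lemma sum_empty_small (a : ℕ → ℕ) (d : ℕ) (hd : 1 ≤ d) {n : ℕ} (hn : n ≤ d) :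
    ∑ i ∈ (Finset.Icc 1 n).filter (fun i => 1 ≤ n - i * d), a (n - i * d) = 0 := by
  have h : (Finset.Icc 1 n).filter (fun i => 1 ≤ n - i * d) = ∅ := by
    ext i
    simp only [Finset.mem_filter, Finset.mem_Icc, Finset.notMem_empty, iff_false, not_and]
    rintro ⟨h1, h2⟩ h3
    have := Nat.le_mul_of_pos_left d (show 0 < i by omega)
    omega
  rw [h, Finset.sum_empty]

lemma sum_step (a : ℕ → ℕ) (d : ℕ) (hd : 1 ≤ d) {n : ℕ} (hn : d + 1 ≤ n) :
    ∑ i ∈ (Finset.Icc 1 n).filter (fun i => 1 ≤ n - i * d), a (n - i * d)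
      = a (n - d) + ∑ i ∈ (Finset.Icc 1 (n - d)).filter (fun i => 1 ≤ n - d - i * d),
          a (n - d - i * d) := by
  have hset : (Finset.Icc 1 n).filter (fun i => 1 ≤ n - i * d)
      = insert 1 (((Finset.Icc 1 (n - d)).filter (fun i => 1 ≤ n - d - i * d)).image (· + 1)) := by
    ext i
    simp only [Finset.mem_filter, Finset.mem_Icc, Finset.mem_insert, Finset.mem_image]
    constructor
    · rintro ⟨⟨h1, h2⟩, h3⟩
      rcases eq_or_lt_of_le h1 with h | h
      · exact Or.inl h.symm
      · refine Or.inr ⟨i - 1, ⟨⟨?_, ?_⟩, ?_⟩, by omega⟩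
        · omega
        · have h4 : (i - 1) * d + d = i * d := by
            have h0 : i - 1 + 1 = i := by omega
            calc (i - 1) * d + d = (i - 1 + 1) * d := by ring
            _ = i * d := by rw [h0]
          have h5 : i - 1 ≤ (i - 1) * d := Nat.le_mul_of_pos_right _ (by omega)
          omega
        · have h4 : (i - 1) * d + d = i * d := by
            have h0 : i - 1 + 1 = i := by omega
            calc (i - 1) * d + d = (i - 1 + 1) * d := by ring
            _ = i * d := by rw [h0]
          omega
    · rintro (h | ⟨j, ⟨⟨hj1, hj2⟩, hj3⟩, hji⟩)
      · subst h
        refine ⟨⟨le_refl 1, by omega⟩, ?_⟩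
        rw [one_mul]; omega
      · subst hji
        have h4 : (j + 1) * d = j * d + d := by ring
        have h5 : j ≤ j * d := Nat.le_mul_of_pos_right _ (by omega)
        exact ⟨⟨by omega, by omega⟩, by omega⟩
  have hnotmem : (1 : ℕ) ∉ ((Finset.Icc 1 (n - d)).filter
      (fun i => 1 ≤ n - d - i * d)).image (· + 1) := by
    simp only [Finset.mem_image]
    rintro ⟨j, hj, hji⟩
    simp only [Finset.mem_filter, Finset.mem_Icc] at hj
    omega
  rw [hset, Finset.sum_insert hnotmem,
    Finset.sum_image (by intro x _ y _ h; simp only at h; omega)]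
  congr 1
  · congr 1
    omega
  · apply Finset.sum_congr rfl
    intro j hj
    congr 1
    have h4 : (j + 1) * d = j * d + d := by ring
    omega

theorem arith_series_bound
    (S : Finset ℕ) (hne : S.Nonempty) (hpos : ∀ s ∈ S, 0 < s)
    (k : ℕ) (hk : k = S.max' hne)
    (c : ℕ) (hc : 0 < c)
    (hleast : IsLeast {m | 0 < m ∧ m ∉ (S : Set ℕ)} (k - c))
    (a : ℕ → ℕ) (ha : IsSlidSeq ↑S a)
    (c' : ℕ) (hc' : 0 < c') (hk2 : 2 * (c' + 1) ≤ k) :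
    ∀ n, 1 ≤ n →
      (∑ i ∈ (Finset.Icc 1 n).filter (fun i => 1 ≤ n - i * (k - c')),
        a (n - i * (k - c'))) < a n := by
  have hpos' : ∀ s ∈ (↑S : Set ℕ), 0 < s := fun s hs => hpos s hs
  intro n
  induction n using Nat.strong_induction_on with
  | _ n IH =>
    intro hn
    by_cases hc1 : n ≤ k - c'
    · rw [sum_empty_small a (k - c') (by omega) hc1]
      exact Slid.pos ha hn
    · push_neg at hc1
      rw [sum_step a (k - c') (by omega) (by omega)]
      by_cases hc2 : n - (k - c') ≤ k - c'
      · rw [sum_empty_small a (k - c') (by omega) hc2]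
        have := Slid.strictMono hpos' ha (show 1 ≤ n - (k - c') by omega)
          (show n - (k - c') < n by omega)
        omega
      · push_neg at hc2
        rw [sum_step a (k - c') (by omega) (by omega)]
        set d := k - c' with hdd
        have hIH := IH (n - d - d) (by omega) (by omega)
        have hG1 := Slid.G S hne hpos k hk a ha (n := n) (by omega)
        have hG2 := Slid.G S hne hpos k hk a ha (n := n - 1) (by omega)
        have hm1 : a (n - d) ≤ a (n - 1 - 1) := by
          rcases eq_or_lt_of_le (show n - d ≤ n - 1 - 1 by omega) with h | h
          · rw [h]
          · exact (Slid.strictMono hpos' ha (by omega) h).le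
        have hm2 : a (n - d - d) ≤ a (n - 1 - 1 - k) := by
          rcases eq_or_lt_of_le (show n - d - d ≤ n - 1 - 1 - k by omega) with h | h
          · rw [h]
          · exact (Slid.strictMono hpos' ha (by omega) h).le
        have hm3 : a (n - d - d) < a (n - 1 - k) :=
          Slid.strictMono hpos' ha (by omega) (by omega)
        omega
end
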